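/- Let X be a Banach space and let U be a weakly exponentially unstable evolution operator on X, with constants N ≥ 1 and ν > 0. Then for every p ≥ 1, setting K = N^p/(1 − e^{−νp}) > 0, for each x₀ ∈ X there exists t₀ ≥ 0 such that ∑_{n=0}^{⌊t−t₀⌋} ‖U(t−n,t₀)x₀‖^p ≤ K‖U(t,t₀)x₀‖^p for all t ≥ t₀, where ⌊·⌋ denotes the integer part. -/

import Mathlib

/-- An evolution operator on a Banach space `X`. -/
structure EvolutionOperator (X : Type*) [NormedAddCommGroup X] [NormedSpace ℝ X] where
  U : ℝ → ℝ → X →L[ℝ] X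
  isId : ∀ t : ℝ, 0 ≤ t → U t t = ContinuousLinearMap.id ℝ X
  cocycle : ∀ t s t₀ : ℝ, 0 ≤ t₀ → t₀ ≤ s → s ≤ t → ∀ x : X, U t s (U s t₀ x) = U t t₀ x
  cont : ∀ x : X, ContinuousOn (fun p : ℝ × ℝ => U p.1 p.2 x)
    {p : ℝ × ℝ | 0 ≤ p.2 ∧ p.2 ≤ p.1}

/-- If `U` is weakly exponentially unstable with constants `N ≥ 1`, `ν > 0`, then for
every `p ≥ 1`, with `K = N^p / (1 - e^(-νp))`, for each `x₀` there is `t₀ ≥ 0` with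
`∑_{n=0}^{⌊t-t₀⌋} ‖U(t-n,t₀)x₀‖^p ≤ K ‖U(t,t₀)x₀‖^p` for all `t ≥ t₀`. -/
theorem discrete_datko_necessity
    {X : Type*} [NormedAddCommGroup X] [NormedSpace ℝ X] [CompleteSpace X]
    (E : EvolutionOperator X) (N ν : ℝ) (hN : 1 ≤ N) (hν : 0 < ν)
    (hweak : ∀ x₀ : X, ∃ t₀ : ℝ, 0 ≤ t₀ ∧ ∀ s t : ℝ, t₀ ≤ s → s ≤ t →
      N * ‖E.U t t₀ x₀‖ ≥ Real.exp (ν * (t - s)) * ‖E.U s t₀ x₀‖)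
    (p : ℝ) (hp : 1 ≤ p) :
    ∀ x₀ : X, ∃ t₀ : ℝ, 0 ≤ t₀ ∧ ∀ t : ℝ, t₀ ≤ t →
      (∑ n ∈ Finset.range (⌊t - t₀⌋₊ + 1), ‖E.U (t - (n : ℝ)) t₀ x₀‖ ^ p) ≤
        (N ^ p / (1 - Real.exp (-(ν * p)))) * ‖E.U t t₀ x₀‖ ^ p := by
  intro x₀
  obtain ⟨t₀, ht₀, hineq⟩ := hweak x₀
  refine ⟨t₀, ht₀, fun t ht => ?_⟩
  have hp0 : (0 : ℝ) ≤ p := le_trans zero_le_one hp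
  have hN0 : (0 : ℝ) ≤ N := le_trans zero_le_one hN
  set r : ℝ := Real.exp (-(ν * p)) with hr
  have hr0 : 0 < r := Real.exp_pos _
  have hr1 : r < 1 := by
    rw [hr, Real.exp_lt_one_iff]
    nlinarith
  set a : ℝ := ‖E.U t t₀ x₀‖ with ha
  have ha0 : 0 ≤ a := norm_nonneg _
  -- termwise bound
  have hterm : ∀ n ∈ Finset.range (⌊t - t₀⌋₊ + 1),
      ‖E.U (t - (n : ℝ)) t₀ x₀‖ ^ p ≤ N ^ p * a ^ p * r ^ n := by
    intro n hn
    have hnle : (n : ℝ) ≤ t - t₀ := by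
      have h1 : n ≤ ⌊t - t₀⌋₊ := Nat.lt_succ_iff.mp (Finset.mem_range.mp hn)
      calc (n : ℝ) ≤ (⌊t - t₀⌋₊ : ℝ) := by exact_mod_cast h1
        _ ≤ t - t₀ := Nat.floor_le (by linarith)
    have h1 : t₀ ≤ t - n := by linarith
    have h2 : t - n ≤ t := by
      have : (0:ℝ) ≤ n := Nat.cast_nonneg n
      linarith
    have hkey := hineq (t - n) t h1 h2
    have hb : ‖E.U (t - (n : ℝ)) t₀ x₀‖ ≤ N * Real.exp (-(ν * n)) * a := by
      have hexp : Real.exp (ν * (t - (t - n))) = Real.exp (ν * n) := by ring_nf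
      rw [hexp] at hkey
      have hpos : 0 < Real.exp (ν * n) := Real.exp_pos _
      rw [Real.exp_neg]
      have hb' : ‖E.U (t - (n : ℝ)) t₀ x₀‖ * Real.exp (ν * n) ≤ N * a := by
        rw [mul_comm]; exact hkey
      calc ‖E.U (t - (n : ℝ)) t₀ x₀‖ ≤ N * a / Real.exp (ν * n) :=
            (le_div_iff₀ hpos).mpr hb'
        _ = N * (Real.exp (ν * n))⁻¹ * a := by rw [div_eq_mul_inv]; ring
    calc ‖E.U (t - (n : ℝ)) t₀ x₀‖ ^ p ≤ (N * Real.exp (-(ν * n)) * a) ^ p :=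
          Real.rpow_le_rpow (norm_nonneg _) hb hp0
      _ = N ^ p * (Real.exp (-(ν * n))) ^ p * a ^ p := by
          rw [Real.mul_rpow (by positivity) ha0,
            Real.mul_rpow hN0 (Real.exp_pos _).le]
      _ = N ^ p * a ^ p * r ^ n := by
          have : (Real.exp (-(ν * n))) ^ p = r ^ n := by
            rw [← Real.exp_mul, hr, ← Real.exp_nat_mul]
            ring_nf
          rw [this]; ring
  have hgeom : ∑ n ∈ Finset.range (⌊t - t₀⌋₊ + 1), r ^ n ≤ 1 / (1 - r) := by
    rw [geom_sum_eq (ne_of_lt hr1), show (r ^ (⌊t - t₀⌋₊ + 1) - 1) / (r - 1)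
        = (1 - r ^ (⌊t - t₀⌋₊ + 1)) / (1 - r) from by rw [← neg_div_neg_eq]; ring_nf]
    have hpow : 0 ≤ r ^ (⌊t - t₀⌋₊ + 1) := pow_nonneg hr0.le _
    gcongr
    · linarith
  calc (∑ n ∈ Finset.range (⌊t - t₀⌋₊ + 1), ‖E.U (t - (n : ℝ)) t₀ x₀‖ ^ p)
      ≤ ∑ n ∈ Finset.range (⌊t - t₀⌋₊ + 1), N ^ p * a ^ p * r ^ n :=
        Finset.sum_le_sum hterm
    _ = N ^ p * a ^ p * ∑ n ∈ Finset.range (⌊t - t₀⌋₊ + 1), r ^ n := by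
        rw [Finset.mul_sum]
    _ ≤ N ^ p * a ^ p * (1 / (1 - r)) := by
        apply mul_le_mul_of_nonneg_left hgeom
        positivity
    _ = (N ^ p / (1 - r)) * a ^ p := by ring
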